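/- Let X be finite, S a subsemilattice of T(X), and t, u ∈ X with u ≠ t such that e(t) = t and e(u) ∈ {u, t} for all e ∈ S. For g ∈ S define g* ∈ T(X) by g*(x) = g(x) if g(x) ≠ u and g*(x) = t if g(x) = u. Then the map g ↦ g* is a semigroup homomorphism from S to T(X); in particular S* = {g* : g ∈ S} is a subsemilattice of T(X). -/

import Mathlib

open scoped Classical

def IsSubsemilattice {X : Type*} (S : Set (X → X)) : Prop :=
  S.Nonempty ∧ (∀ e ∈ S, e ∘ e = e) ∧ (∀ e ∈ S, ∀ f ∈ S, e ∘ f = f ∘ e) ∧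
    (∀ e ∈ S, ∀ f ∈ S, e ∘ f ∈ S)

noncomputable def star {X : Type*} (t u : X) (g : X → X) : X → X :=
  fun x => if g x = u then t else g x

theorem star_hom_and_semilattice {X : Type*} [Fintype X]
    (S : Set (X → X)) (hS : IsSubsemilattice S)
    (t u : X) (hut : u ≠ t)
    (ht : ∀ e ∈ S, e t = t) (hu : ∀ e ∈ S, e u = u ∨ e u = t) :
    (∀ g ∈ S, ∀ h ∈ S, star t u (g ∘ h) = star t u g ∘ star t u h) ∧
    IsSubsemilattice (star t u '' S) := by
  obtain ⟨hne, hidem, hcomm, hclos⟩ := hS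
  have hom : ∀ g ∈ S, ∀ h ∈ S, star t u (g ∘ h) = star t u g ∘ star t u h := by
    intro g hg h hh
    funext x
    simp only [_root_.star, Function.comp_apply]
    by_cases hx : h x = u
    · simp only [hx]
      rcases hu g hg with h1 | h1 <;> simp [h1, hut.symm, ht g hg, hut]
    · simp [hx]
  refine ⟨hom, ⟨hne.image _, ?_, ?_, ?_⟩⟩
  · rintro _ ⟨g, hg, rfl⟩
    rw [← hom g hg g hg, hidem g hg]
  · rintro _ ⟨g, hg, rfl⟩ _ ⟨h, hh, rfl⟩
    rw [← hom g hg h hh, ← hom h hh g hg, hcomm g hg h hh]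
  · rintro _ ⟨g, hg, rfl⟩ _ ⟨h, hh, rfl⟩
    rw [← hom g hg h hh]
    exact ⟨g ∘ h, hclos g hg h hh, rfl⟩
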